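/- Suppose additionally that y < sqrt(1/3 - x^2) + sqrt(3)/3 (region R1_3). Let r = sqrt(x^2 + y^2) * sqrt((x + 1/2)^2 + (y - sqrt(3)/2)^2) / (2(y + sqrt(3)*x)) and R = sqrt(16*r^2 - 1). Then the configuration p : Fin 3 -> R^2 given by p 0 = (0,0), p 1 = (1/2, -R/2), p 2 = ((sqrt(3)*R + 1)/4, (sqrt(3) - R)/4) is a packing of 3 equal circles of radius r on the flat torus R^2/Lambda; that is, ||p i - p j + lambda|| >= 2r for all i, j in Fin 3 and all lambda in Lambda with (i ≠ j or lambda ≠ 0). -/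
import Mathlib


noncomputable section

/-- The point `(a, b)` in the Euclidean plane. -/
def pt (a b : ℝ) : EuclideanSpace ℝ (Fin 2) :=
  (WithLp.equiv 2 (Fin 2 → ℝ)).symm ![a, b]

/-- The lattice generated by `v1 = (1,0)` and `v2 = (x,y)`. -/
def TLat (x y : ℝ) : Set (EuclideanSpace ℝ (Fin 2)) :=
  {v | ∃ m n : ℤ, v = (m : ℝ) • pt 1 0 + (n : ℝ) • pt x y}

/-- `p` is a packing of `k` equal circles of radius `r` on the flat torus `ℝ²/Λ(x,y)`. -/
def IsPacking (x y : ℝ) {k : ℕ} (r : ℝ) (p : Fin k → EuclideanSpace ℝ (Fin 2)) : Prop :=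
  ∀ i j : Fin k, ∀ l ∈ TLat x y, (i ≠ j ∨ l ≠ 0) → 2 * r ≤ ‖p i - p j + l‖

set_option maxHeartbeats 2000000
lemma big1 (s R c w : ℝ) (hs2 : s^2 = 3) (hs0 : 0 < s) (hR0 : 0 ≤ R) (hRs : R*s ≤ 1)
    (h : 1 ≤ c ∨ c ≤ -1) : R^2+1 ≤ 4*(c^2+w^2) := by
  have h7 : s^2*R^2 = 3*R^2 := by rw [hs2]
  rcases h with h|h <;> nlinarith [sq_nonneg w, mul_nonneg hR0 hs0.le, hRs, h7, h]

lemma big2 (s R c w : ℝ) (hs2 : s^2 = 3) (hs0 : 0 < s) (hR0 : 0 ≤ R) (hRs : R*s ≤ 1)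
    (h : 2 ≤ s*w ∨ s*w ≤ -2) : R^2+1 ≤ 4*(c^2+w^2) := by
  have h7 : s^2*R^2 = 3*R^2 := by rw [hs2]
  have h8 : s^2*w^2 = 3*w^2 := by rw [hs2]
  rcases h with h|h <;> nlinarith [sq_nonneg c, mul_nonneg hR0 hs0.le, hRs, h7, h8, h]

lemma derived (x y R s : ℝ) (hs2 : s^2 = 3) (hs0 : 0 < s) (hx0 : 0 ≤ x) (hx1 : x ≤ 1/2)
    (hxy : 1 ≤ x^2+y^2) (hy : 0 < y) (hK : s*(x^2+y^2) ≤ 2*y)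
    (hRD : R*(s*x+y) = 2*(x^2+y^2)+x-s*y) (hR0 : 0 ≤ R) :
    s ≤ 2*y ∧ s*y ≤ 2 ∧ 0 < s*x+y ∧ R*s ≤ 1 ∧ 0 ≤ y - s*x ∧ 3/2 ≤ s*y ∧
    0 ≤ x^2+y^2 - x - y*R ∧ 0 ≤ 2*(x^2+y^2) - x - s*y + R*(y-s*x) ∧
    0 ≤ s*R - 4*x + 1 ∧ 3/4 ≤ y^2 ∧ 1 ≤ s ∧ y ≤ s ∧ R ≤ y ∧ R ≤ 1 := by
  have ey : s^2*y = 3*y := by rw [hs2]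
  have hy2 : 3/4 ≤ y^2 := by nlinarith
  have ys : s ≤ 2*y := by nlinarith
  have ysu : s*y ≤ 2 := by nlinarith [mul_nonneg hs0.le (sq_nonneg x)]
  have hD : 0 < s*x+y := by nlinarith [mul_nonneg hs0.le hx0]
  have hRs : R*s ≤ 1 := by
    have h0 : R*s*(s*x+y) = s*(2*(x^2+y^2)+x-s*y) := by linear_combination s*hRD
    have h1 : R*s*(s*x+y) ≤ 1*(s*x+y) := by nlinarith [h0, hK, ey]
    exact le_of_mul_le_mul_right (by linarith) hD
  have hysx : 0 ≤ y - s*x := by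
    nlinarith [mul_nonneg hs0.le (by linarith : (0:ℝ) ≤ 1/2 - x), ys]
  have syl : (3:ℝ)/2 ≤ s*y := by
    nlinarith [mul_nonneg hs0.le (by linarith : (0:ℝ) ≤ 2*y - s)]
  have hsy : y ≤ s := by nlinarith [ysu, hy, hs0]
  have hs1 : (1:ℝ) ≤ s := by nlinarith
  have hyR : R ≤ y := by nlinarith [syl, hRs, hs0]
  have hR1 : R ≤ 1 := by nlinarith [mul_nonneg hR0 (by linarith : (0:ℝ) ≤ s - 1), hRs]
  have f2 : 0 ≤ x - x^2 + s*y - y^2 := by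
    nlinarith [mul_nonneg hx0 (by linarith : (0:ℝ) ≤ 1 - x),
      mul_nonneg hy.le (by linarith : (0:ℝ) ≤ s - y)]
  have e1 : (x^2+y^2 - x - y*R)*(s*x+y) = (y - s*x)*(x - x^2 + s*y - y^2) := by
    linear_combination (-y)*hRD + x*y*hs2
  have hq1 : 0 ≤ x^2+y^2 - x - y*R := by nlinarith [e1, hD, mul_nonneg hysx f2]
  have e2 : (2*(x^2+y^2) - x - s*y + R*(y-s*x))*(s*x+y) = 2*(x^2+y^2)*(2*y-s) := by
    linear_combination (y - s*x)*hRD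
  have hq2 : 0 ≤ 2*(x^2+y^2) - x - s*y + R*(y-s*x) := by
    nlinarith [e2, hD, mul_nonneg (by positivity : (0:ℝ) ≤ 2*(x^2+y^2)) (by linarith : (0:ℝ) ≤ 2*y - s)]
  have e3 : (s*R - 4*x + 1)*(s*x+y) = 2*(y - s*x)*(s*y + x - 1) := by
    linear_combination s*hRD + (2*x*y - y)*hs2
  have hq3 : 0 ≤ s*R - 4*x + 1 := by
    nlinarith [e3, hD, mul_nonneg hysx (by linarith : (0:ℝ) ≤ s*y + x - 1)]
  exact ⟨ys, ysu, hD, hRs, hysx, syl, hq1, hq2, hq3, hy2, hs1, hsy, hyR, hR1⟩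

lemma case00 (x y R s : ℝ) (hs2 : s^2 = 3) (hs0 : 0 < s) (hx0 : 0 ≤ x) (hx1 : x ≤ 1/2)
    (hxy : 1 ≤ x^2+y^2) (hy : 0 < y) (hK : s*(x^2+y^2) ≤ 2*y)
    (hRD : R*(s*x+y) = 2*(x^2+y^2)+x-s*y) (hR0 : 0 ≤ R) (m n : ℤ)
    (hmn : ¬(m = 0 ∧ n = 0)) :
    R^2+1 ≤ 4*(((m:ℝ) + (n:ℝ)*x)^2 + ((n:ℝ)*y)^2) := by
  obtain ⟨ys, ysu, hD, hRs, hysx, syl, hq1, hq2, hq3, hy2, hs1, hsy, hyR, hR1⟩ :=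
    derived x y R s hs2 hs0 hx0 hx1 hxy hy hK hRD hR0
  obtain hn|hn|hn|hn|hn : n ≤ -2 ∨ n = -1 ∨ n = 0 ∨ n = 1 ∨ 2 ≤ n := by omega
  · have hn' : (n:ℝ) ≤ -2 := by exact_mod_cast hn
    refine big2 s R _ _ hs2 hs0 hR0 hRs (Or.inr ?_)
    nlinarith [syl, mul_nonneg (by linarith : (0:ℝ) ≤ -2 - (n:ℝ))
      (by linarith : (0:ℝ) ≤ s*y - 3/2)]
  · subst hn; push_cast
    nlinarith [sq_nonneg ((m:ℝ) + (-1)*x), hy2, hR1, hR0]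
  · subst hn; push_cast
    have hm : m ≠ 0 := by simpa using hmn
    obtain hm'|hm' : 1 ≤ m ∨ m ≤ -1 := by omega
    · refine big1 s R _ _ hs2 hs0 hR0 hRs (Or.inl ?_)
      have : (1:ℝ) ≤ (m:ℝ) := by exact_mod_cast hm'
      linarith
    · refine big1 s R _ _ hs2 hs0 hR0 hRs (Or.inr ?_)
      have : (m:ℝ) ≤ -1 := by exact_mod_cast hm'
      linarith
  · subst hn; push_cast
    nlinarith [sq_nonneg ((m:ℝ) + 1*x), hy2, hR1, hR0]
  · have hn' : (2:ℝ) ≤ (n:ℝ) := by exact_mod_cast hn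
    refine big2 s R _ _ hs2 hs0 hR0 hRs (Or.inl ?_)
    nlinarith [syl, mul_nonneg (by linarith : (0:ℝ) ≤ (n:ℝ) - 2)
      (by linarith : (0:ℝ) ≤ s*y - 3/2)]
lemma case01 (x y R s : ℝ) (hs2 : s^2 = 3) (hs0 : 0 < s) (hx0 : 0 ≤ x) (hx1 : x ≤ 1/2)
    (hxy : 1 ≤ x^2+y^2) (hy : 0 < y) (hK : s*(x^2+y^2) ≤ 2*y)
    (hRD : R*(s*x+y) = 2*(x^2+y^2)+x-s*y) (hR0 : 0 ≤ R) (m n : ℤ) :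
    R^2+1 ≤ 4*((-(1/2) + ((m:ℝ) + (n:ℝ)*x))^2 + (R/2 + (n:ℝ)*y)^2) := by
  obtain ⟨ys, ysu, hD, hRs, hysx, syl, hq1, hq2, hq3, hy2, hs1, hsy, hyR, hR1⟩ :=
    derived x y R s hs2 hs0 hx0 hx1 hxy hy hK hRD hR0
  obtain hn|hn|hn|hn|hn : n ≤ -2 ∨ n = -1 ∨ n = 0 ∨ n = 1 ∨ 2 ≤ n := by omega
  · have hn' : (n:ℝ) ≤ -2 := by exact_mod_cast hn
    refine big2 s R _ _ hs2 hs0 hR0 hRs (Or.inr ?_)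
    nlinarith [hRs, syl, hR0, hs0.le, mul_nonneg (by linarith : (0:ℝ) ≤ -2 - (n:ℝ))
      (by linarith : (0:ℝ) ≤ s*y - 3/2)]
  · subst hn; push_cast
    obtain hm|hm|hm|hm|hm : m ≤ -2 ∨ m = -1 ∨ m = 0 ∨ m = 1 ∨ 2 ≤ m := by omega
    · have hm' : (m:ℝ) ≤ -2 := by exact_mod_cast hm
      refine big1 s R _ _ hs2 hs0 hR0 hRs (Or.inr ?_)
      nlinarith [hRs, hR0, hx0, hx1, hs1, mul_nonneg hR0 (by linarith : (0:ℝ) ≤ s - 1)]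
    · subst hm; push_cast
      nlinarith [mul_nonneg hy.le (by linarith : (0:ℝ) ≤ y - R), hx0, sq_nonneg x]
    · subst hm; push_cast
      nlinarith [mul_nonneg hy.le (by linarith : (0:ℝ) ≤ y - R), hx0, sq_nonneg x]
    · subst hm; push_cast
      nlinarith [hq1]
    · have hm' : (2:ℝ) ≤ (m:ℝ) := by exact_mod_cast hm
      refine big1 s R _ _ hs2 hs0 hR0 hRs (Or.inl ?_)
      nlinarith [hRs, hR0, hx0, hx1, hs1, mul_nonneg hR0 (by linarith : (0:ℝ) ≤ s - 1)]
  · subst hn; push_cast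
    obtain hm|hm|hm|hm|hm : m ≤ -2 ∨ m = -1 ∨ m = 0 ∨ m = 1 ∨ 2 ≤ m := by omega
    · have hm' : (m:ℝ) ≤ -2 := by exact_mod_cast hm
      refine big1 s R _ _ hs2 hs0 hR0 hRs (Or.inr ?_)
      nlinarith [hRs, hR0, hx0, hx1, hs1, mul_nonneg hR0 (by linarith : (0:ℝ) ≤ s - 1)]
    · subst hm; push_cast
      nlinarith []
    · subst hm; push_cast
      nlinarith []
    · subst hm; push_cast
      nlinarith []
    · have hm' : (2:ℝ) ≤ (m:ℝ) := by exact_mod_cast hm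
      refine big1 s R _ _ hs2 hs0 hR0 hRs (Or.inl ?_)
      nlinarith [hRs, hR0, hx0, hx1, hs1, mul_nonneg hR0 (by linarith : (0:ℝ) ≤ s - 1)]
  · subst hn; push_cast
    obtain hm|hm|hm|hm|hm : m ≤ -2 ∨ m = -1 ∨ m = 0 ∨ m = 1 ∨ 2 ≤ m := by omega
    · have hm' : (m:ℝ) ≤ -2 := by exact_mod_cast hm
      refine big1 s R _ _ hs2 hs0 hR0 hRs (Or.inr ?_)
      nlinarith [hRs, hR0, hx0, hx1, hs1, mul_nonneg hR0 (by linarith : (0:ℝ) ≤ s - 1)]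
    · subst hm; push_cast
      nlinarith [mul_nonneg hy.le hR0, sq_nonneg y, sq_nonneg x, hx1, hx0]
    · subst hm; push_cast
      nlinarith [mul_nonneg hy.le hR0, hy2, hx1, sq_nonneg x]
    · subst hm; push_cast
      nlinarith [mul_nonneg hy.le hR0, sq_nonneg y, sq_nonneg x, hx0]
    · have hm' : (2:ℝ) ≤ (m:ℝ) := by exact_mod_cast hm
      refine big1 s R _ _ hs2 hs0 hR0 hRs (Or.inl ?_)
      nlinarith [hRs, hR0, hx0, hx1, hs1, mul_nonneg hR0 (by linarith : (0:ℝ) ≤ s - 1)]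
  · have hn' : (2:ℝ) ≤ (n:ℝ) := by exact_mod_cast hn
    refine big2 s R _ _ hs2 hs0 hR0 hRs (Or.inl ?_)
    nlinarith [hRs, syl, hs0.le, mul_nonneg hR0 hs0.le, mul_nonneg
      (by linarith : (0:ℝ) ≤ (n:ℝ) - 2) (by linarith : (0:ℝ) ≤ s*y - 3/2)]

lemma case02 (x y R s : ℝ) (hs2 : s^2 = 3) (hs0 : 0 < s) (hx0 : 0 ≤ x) (hx1 : x ≤ 1/2)
    (hxy : 1 ≤ x^2+y^2) (hy : 0 < y) (hK : s*(x^2+y^2) ≤ 2*y)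
    (hRD : R*(s*x+y) = 2*(x^2+y^2)+x-s*y) (hR0 : 0 ≤ R) (m n : ℤ) :
    R^2+1 ≤ 4*((-((s*R+1)/4) + ((m:ℝ) + (n:ℝ)*x))^2 + ((R-s)/4 + (n:ℝ)*y)^2) := by
  obtain ⟨ys, ysu, hD, hRs, hysx, syl, hq1, hq2, hq3, hy2, hs1, hsy, hyR, hR1⟩ :=
    derived x y R s hs2 hs0 hx0 hx1 hxy hy hK hRD hR0
  obtain hn|hn|hn|hn|hn : n ≤ -2 ∨ n = -1 ∨ n = 0 ∨ n = 1 ∨ 2 ≤ n := by omega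
  · have hn' : (n:ℝ) ≤ -2 := by exact_mod_cast hn
    refine big2 s R _ _ hs2 hs0 hR0 hRs (Or.inr ?_)
    nlinarith [hRs, syl, hR0, hs0.le, mul_nonneg (by linarith : (0:ℝ) ≤ -2 - (n:ℝ))
      (by linarith : (0:ℝ) ≤ s*y - 3/2)]
  · subst hn; push_cast
    obtain hm|hm|hm|hm|hm : m ≤ -2 ∨ m = -1 ∨ m = 0 ∨ m = 1 ∨ 2 ≤ m := by omega
    · have hm' : (m:ℝ) ≤ -2 := by exact_mod_cast hm
      refine big1 s R _ _ hs2 hs0 hR0 hRs (Or.inr ?_)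
      nlinarith [hRs, hR0, hx0, hx1, hs1, mul_nonneg hR0 (by linarith : (0:ℝ) ≤ s - 1)]
    · subst hm; push_cast
      nlinarith [mul_nonneg hy.le (by linarith : (0:ℝ) ≤ y - R), mul_nonneg (mul_nonneg hx0 hR0) hs0.le, mul_nonneg hy.le hs0.le, mul_nonneg hR0 hs0.le, hx0, sq_nonneg x, sq_nonneg y]
    · subst hm; push_cast
      nlinarith [mul_nonneg hy.le (by linarith : (0:ℝ) ≤ y - R), mul_nonneg hy.le hs0.le, mul_nonneg (mul_nonneg hx0 hR0) hs0.le, hx0, sq_nonneg x, sq_nonneg y]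
    · subst hm; push_cast
      nlinarith [mul_nonneg hy.le (by linarith : (0:ℝ) ≤ s - R), mul_nonneg (mul_nonneg hx0 hR0) hs0.le, hy2, hx1, hRs, sq_nonneg x]
    · have hm' : (2:ℝ) ≤ (m:ℝ) := by exact_mod_cast hm
      refine big1 s R _ _ hs2 hs0 hR0 hRs (Or.inl ?_)
      nlinarith [hRs, hR0, hx0, hx1, hs1, mul_nonneg hR0 (by linarith : (0:ℝ) ≤ s - 1)]
  · subst hn; push_cast
    obtain hm|hm|hm|hm|hm : m ≤ -2 ∨ m = -1 ∨ m = 0 ∨ m = 1 ∨ 2 ≤ m := by omega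
    · have hm' : (m:ℝ) ≤ -2 := by exact_mod_cast hm
      refine big1 s R _ _ hs2 hs0 hR0 hRs (Or.inr ?_)
      nlinarith [hRs, hR0, hx0, hx1, hs1, mul_nonneg hR0 (by linarith : (0:ℝ) ≤ s - 1)]
    · subst hm; push_cast
      nlinarith [mul_nonneg hR0 hs0.le]
    · subst hm; push_cast
      nlinarith []
    · subst hm; push_cast
      nlinarith [hRs]
    · have hm' : (2:ℝ) ≤ (m:ℝ) := by exact_mod_cast hm
      refine big1 s R _ _ hs2 hs0 hR0 hRs (Or.inl ?_)
      nlinarith [hRs, hR0, hx0, hx1, hs1, mul_nonneg hR0 (by linarith : (0:ℝ) ≤ s - 1)]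
  · subst hn; push_cast
    obtain hm|hm|hm|hm|hm : m ≤ -2 ∨ m = -1 ∨ m = 0 ∨ m = 1 ∨ 2 ≤ m := by omega
    · have hm' : (m:ℝ) ≤ -2 := by exact_mod_cast hm
      refine big1 s R _ _ hs2 hs0 hR0 hRs (Or.inr ?_)
      nlinarith [hRs, hR0, hx0, hx1, hs1, mul_nonneg hR0 (by linarith : (0:ℝ) ≤ s - 1)]
    · subst hm; push_cast
      nlinarith [mul_nonneg hy.le (by linarith : (0:ℝ) ≤ 2*y - s), mul_nonneg (mul_nonneg hR0 hs0.le) (by linarith : (0:ℝ) ≤ 2 - 2*x), mul_nonneg hy.le hR0, mul_nonneg (by linarith : (0:ℝ) ≤ 1 - x) (by linarith : (0:ℝ) ≤ 3 - 2*x)]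
    · subst hm; push_cast
      nlinarith [hq2]
    · subst hm; push_cast
      nlinarith [hRD, hRs, hx0]
    · have hm' : (2:ℝ) ≤ (m:ℝ) := by exact_mod_cast hm
      refine big1 s R _ _ hs2 hs0 hR0 hRs (Or.inl ?_)
      nlinarith [hRs, hR0, hx0, hx1, hs1, mul_nonneg hR0 (by linarith : (0:ℝ) ≤ s - 1)]
  · have hn' : (2:ℝ) ≤ (n:ℝ) := by exact_mod_cast hn
    refine big2 s R _ _ hs2 hs0 hR0 hRs (Or.inl ?_)
    nlinarith [hRs, syl, hs0.le, mul_nonneg hR0 hs0.le, mul_nonneg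
      (by linarith : (0:ℝ) ≤ (n:ℝ) - 2) (by linarith : (0:ℝ) ≤ s*y - 3/2)]

lemma case12 (x y R s : ℝ) (hs2 : s^2 = 3) (hs0 : 0 < s) (hx0 : 0 ≤ x) (hx1 : x ≤ 1/2)
    (hxy : 1 ≤ x^2+y^2) (hy : 0 < y) (hK : s*(x^2+y^2) ≤ 2*y)
    (hRD : R*(s*x+y) = 2*(x^2+y^2)+x-s*y) (hR0 : 0 ≤ R) (m n : ℤ) :
    R^2+1 ≤ 4*(((1-s*R)/4 + ((m:ℝ) + (n:ℝ)*x))^2 + (-((R+s)/4) + (n:ℝ)*y)^2) := by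
  obtain ⟨ys, ysu, hD, hRs, hysx, syl, hq1, hq2, hq3, hy2, hs1, hsy, hyR, hR1⟩ :=
    derived x y R s hs2 hs0 hx0 hx1 hxy hy hK hRD hR0
  obtain hn|hn|hn|hn|hn : n ≤ -2 ∨ n = -1 ∨ n = 0 ∨ n = 1 ∨ 2 ≤ n := by omega
  · have hn' : (n:ℝ) ≤ -2 := by exact_mod_cast hn
    refine big2 s R _ _ hs2 hs0 hR0 hRs (Or.inr ?_)
    nlinarith [hRs, syl, hR0, hs0.le, mul_nonneg (by linarith : (0:ℝ) ≤ -2 - (n:ℝ))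
      (by linarith : (0:ℝ) ≤ s*y - 3/2)]
  · subst hn; push_cast
    obtain hm|hm|hm|hm|hm : m ≤ -2 ∨ m = -1 ∨ m = 0 ∨ m = 1 ∨ 2 ≤ m := by omega
    · have hm' : (m:ℝ) ≤ -2 := by exact_mod_cast hm
      refine big1 s R _ _ hs2 hs0 hR0 hRs (Or.inr ?_)
      nlinarith [hRs, hR0, hx0, hx1, hs1, mul_nonneg hR0 (by linarith : (0:ℝ) ≤ s - 1)]
    · subst hm; push_cast
      nlinarith [mul_nonneg hy.le hs0.le, mul_nonneg hy.le hR0, mul_nonneg (mul_nonneg hx0 hR0) hs0.le, mul_nonneg hR0 hs0.le, hx0, sq_nonneg x, sq_nonneg y]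
    · subst hm; push_cast
      nlinarith [syl, mul_nonneg hy.le hR0, mul_nonneg (mul_nonneg hx0 hR0) hs0.le, hx1, sq_nonneg x, sq_nonneg y, hy2]
    · subst hm; push_cast
      nlinarith [syl, hy2, hRs, hx1, mul_nonneg hy.le hR0, mul_nonneg (mul_nonneg hx0 hR0) hs0.le, sq_nonneg x]
    · have hm' : (2:ℝ) ≤ (m:ℝ) := by exact_mod_cast hm
      refine big1 s R _ _ hs2 hs0 hR0 hRs (Or.inl ?_)
      nlinarith [hRs, hR0, hx0, hx1, hs1, mul_nonneg hR0 (by linarith : (0:ℝ) ≤ s - 1)]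
  · subst hn; push_cast
    obtain hm|hm|hm|hm|hm : m ≤ -2 ∨ m = -1 ∨ m = 0 ∨ m = 1 ∨ 2 ≤ m := by omega
    · have hm' : (m:ℝ) ≤ -2 := by exact_mod_cast hm
      refine big1 s R _ _ hs2 hs0 hR0 hRs (Or.inr ?_)
      nlinarith [hRs, hR0, hx0, hx1, hs1, mul_nonneg hR0 (by linarith : (0:ℝ) ≤ s - 1)]
    · subst hm; push_cast
      nlinarith [mul_nonneg hR0 hs0.le]
    · subst hm; push_cast
      nlinarith []
    · subst hm; push_cast
      nlinarith [hRs]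
    · have hm' : (2:ℝ) ≤ (m:ℝ) := by exact_mod_cast hm
      refine big1 s R _ _ hs2 hs0 hR0 hRs (Or.inl ?_)
      nlinarith [hRs, hR0, hx0, hx1, hs1, mul_nonneg hR0 (by linarith : (0:ℝ) ≤ s - 1)]
  · subst hn; push_cast
    obtain hm|hm|hm|hm|hm : m ≤ -2 ∨ m = -1 ∨ m = 0 ∨ m = 1 ∨ 2 ≤ m := by omega
    · have hm' : (m:ℝ) ≤ -2 := by exact_mod_cast hm
      refine big1 s R _ _ hs2 hs0 hR0 hRs (Or.inr ?_)
      nlinarith [hRs, hR0, hx0, hx1, hs1, mul_nonneg hR0 (by linarith : (0:ℝ) ≤ s - 1)]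
    · subst hm; push_cast
      nlinarith [hRD, hq3]
    · subst hm; push_cast
      nlinarith [hRD]
    · subst hm; push_cast
      nlinarith [hRD, hRs, hx0]
    · have hm' : (2:ℝ) ≤ (m:ℝ) := by exact_mod_cast hm
      refine big1 s R _ _ hs2 hs0 hR0 hRs (Or.inl ?_)
      nlinarith [hRs, hR0, hx0, hx1, hs1, mul_nonneg hR0 (by linarith : (0:ℝ) ≤ s - 1)]
  · have hn' : (2:ℝ) ≤ (n:ℝ) := by exact_mod_cast hn
    refine big2 s R _ _ hs2 hs0 hR0 hRs (Or.inl ?_)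
    nlinarith [hRs, syl, hs0.le, mul_nonneg hR0 hs0.le, mul_nonneg
      (by linarith : (0:ℝ) ≤ (n:ℝ) - 2) (by linarith : (0:ℝ) ≤ s*y - 3/2)]

lemma pt_norm (a b : ℝ) : ‖pt a b‖ = Real.sqrt (a^2+b^2) := by
  rw [EuclideanSpace.norm_eq]
  simp [pt, Fin.sum_univ_two, sq_abs]

lemma vec_eq (a b c d mr nr x y : ℝ) :
    pt a b - pt c d + (mr • pt 1 0 + nr • pt x y)
      = pt (a - c + (mr + nr*x)) (b - d + nr*y) := by
  ext i
  fin_cases i <;> simp [pt] <;> ring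

theorem three_circles_packing_R1 (x y : ℝ) (hxy : 1 ≤ x ^ 2 + y ^ 2) (hy : 0 < y) (hx0 : 0 ≤ x) (hx1 : x ≤ 1 / 2)
    (hreg : y < Real.sqrt (1 / 3 - x ^ 2) + Real.sqrt 3 / 3)
    (r R : ℝ) (hr : r = Real.sqrt (x ^ 2 + y ^ 2) * Real.sqrt ((x + 1 / 2) ^ 2 + (y - Real.sqrt 3 / 2) ^ 2) / (2 * (y + Real.sqrt 3 * x)))
    (hR : R = Real.sqrt (16 * r ^ 2 - 1))
    : IsPacking x y r ![pt 0 0, pt (1 / 2) (-R / 2), pt ((Real.sqrt 3 * R + 1) / 4) ((Real.sqrt 3 - R) / 4)] := by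
  set s := Real.sqrt 3 with hsdef
  have hs2 : s ^ 2 = 3 := Real.sq_sqrt (by norm_num)
  have hs0 : 0 < s := Real.sqrt_pos.mpr (by norm_num)
  have hs1 : 1 < s := by nlinarith
  have hy2 : 3 / 4 ≤ y ^ 2 := by nlinarith
  have ys : s ≤ 2 * y := by nlinarith [sq_nonneg (s - 2*y)]
  have hK : s * (x ^ 2 + y ^ 2) ≤ 2 * y := by
    have h1 : y - s / 3 < Real.sqrt (1 / 3 - x ^ 2) := by linarith
    have h2 : (y - s / 3) ^ 2 < 1 / 3 - x ^ 2 := by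
      have h0 : 0 ≤ y - s / 3 := by nlinarith
      nlinarith [Real.sq_sqrt (show (0:ℝ) ≤ 1/3 - x^2 by nlinarith), h1,
        Real.sqrt_nonneg (1/3 - x^2)]
    nlinarith
  have ysu : s * y ≤ 2 := by nlinarith
  have hD : 0 < s * x + y := by have := mul_nonneg hs0.le hx0; linarith
  have hd1 : (2*(y+s*x)) ≠ 0 := ne_of_gt (by nlinarith)
  have hd2 : (s*x+y) ≠ 0 := ne_of_gt hD
  have hr2 : 16 * r ^ 2 - 1 = ((2*(x^2+y^2) + x - s*y) / (s*x+y)) ^ 2 := by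
    rw [hr, div_pow, mul_pow, Real.sq_sqrt (by positivity : (0:ℝ) ≤ x^2+y^2),
      Real.sq_sqrt (by positivity : (0:ℝ) ≤ (x+1/2)^2 + (y - s/2)^2), div_pow]
    field_simp
    ring
  have hN : 0 ≤ 2*(x^2+y^2) + x - s*y := by nlinarith
  have hRval : R = (2*(x^2+y^2) + x - s*y) / (s*x+y) := by
    rw [hR, hr2, Real.sqrt_sq (div_nonneg hN hD.le)]
  have hRD : R * (s*x + y) = 2*(x^2+y^2) + x - s*y := by
    rw [hRval]; field_simp
  have hR0 : 0 ≤ R := hR ▸ Real.sqrt_nonneg _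
  have h16 : 16 * r ^ 2 = R ^ 2 + 1 := by
    rw [hRval, ← hr2]; ring
  have hr0 : 0 ≤ r := by
    rw [hr]
    exact div_nonneg (mul_nonneg (Real.sqrt_nonneg _) (Real.sqrt_nonneg _)) (by linarith)
  intro i j l hl hij
  obtain ⟨m, n, rfl⟩ := hl
  have master : ∀ a b c d : ℝ,
      R^2+1 ≤ 4*((a - c + ((m:ℝ) + (n:ℝ)*x))^2 + (b - d + (n:ℝ)*y)^2) →
      2*r ≤ ‖pt a b - pt c d + ((m:ℝ) • pt 1 0 + (n:ℝ) • pt x y)‖ := by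
    intro a b c d hE
    rw [vec_eq, pt_norm,
      show (2*r) = Real.sqrt ((2*r)^2) from (Real.sqrt_sq (by linarith)).symm]
    apply Real.sqrt_le_sqrt
    linarith [hE, h16]
  fin_cases i <;> fin_cases j
  · -- i=0 j=0
    have hmn : ¬(m = 0 ∧ n = 0) := by
      rintro ⟨rfl, rfl⟩
      rcases hij with h|h
      · exact h rfl
      · apply h; push_cast; simp
    have key := case00 x y R s hs2 hs0 hx0 hx1 hxy hy hK hRD hR0 m n hmn
    exact master 0 0 0 0 (by linarith [key])
  · have key := case01 x y R s hs2 hs0 hx0 hx1 hxy hy hK hRD hR0 m n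
    exact master 0 0 (1/2) (-R/2) (by linarith [key])
  · have key := case02 x y R s hs2 hs0 hx0 hx1 hxy hy hK hRD hR0 m n
    exact master 0 0 ((s*R+1)/4) ((s-R)/4) (by linarith [key])
  · have key := case01 x y R s hs2 hs0 hx0 hx1 hxy hy hK hRD hR0 (-m) (-n)
    push_cast at key
    exact master (1/2) (-R/2) 0 0 (by linarith [key])
  · have hmn : ¬(m = 0 ∧ n = 0) := by
      rintro ⟨rfl, rfl⟩
      rcases hij with h|h
      · exact h rfl
      · apply h; push_cast; simp
    have key := case00 x y R s hs2 hs0 hx0 hx1 hxy hy hK hRD hR0 m n hmn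
    exact master (1/2) (-R/2) (1/2) (-R/2) (by linarith [key])
  · have key := case12 x y R s hs2 hs0 hx0 hx1 hxy hy hK hRD hR0 m n
    exact master (1/2) (-R/2) ((s*R+1)/4) ((s-R)/4) (by linarith [key])
  · have key := case02 x y R s hs2 hs0 hx0 hx1 hxy hy hK hRD hR0 (-m) (-n)
    push_cast at key
    exact master ((s*R+1)/4) ((s-R)/4) 0 0 (by linarith [key])
  · have key := case12 x y R s hs2 hs0 hx0 hx1 hxy hy hK hRD hR0 (-m) (-n)
    push_cast at key
    exact master ((s*R+1)/4) ((s-R)/4) (1/2) (-R/2) (by linarith [key])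
  · have hmn : ¬(m = 0 ∧ n = 0) := by
      rintro ⟨rfl, rfl⟩
      rcases hij with h|h
      · exact h rfl
      · apply h; push_cast; simp
    have key := case00 x y R s hs2 hs0 hx0 hx1 hxy hy hK hRD hR0 m n hmn
    exact master ((s*R+1)/4) ((s-R)/4) ((s*R+1)/4) ((s-R)/4) (by linarith [key])
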